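/- (Scaling relation) Let s ≥ 2 be an integer and let T be a finite tree with n ≥ 2 vertices in which every vertex has degree at most s. For t ≥ 1 set A_t = 2·W(V_s^t(T))/(n(s+1)^t) and N_t = n(s+1)^t. Then the ratio log(A_t)/log(N_t) converges, as t → ∞, to λ = 1 + log 3 / log(s+1). In particular the limiting exponent λ does not depend on the choice of the seed tree T. -/

import Mathlib

open SimpleGraph Finset

section VicsekDefs

variable {V : Type} [Fintype V] [DecidableEq V]

/-- Vertex type of the Vicsek graph `V_s(T)`: the original vertices of `T`,
one subdivision vertex `(u, v)` for every ordered adjacent pair (the one closer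
to `u` on the subdivided edge `uv`), and `s - deg v` pendant vertices attached
to each original vertex `v`. -/
abbrev VicsekVert (s : ℕ) (T : SimpleGraph V) [DecidableRel T.Adj] : Type :=
  V ⊕ ({p : V × V // T.Adj p.1 p.2} ⊕ (v : V) × Fin (s - T.degree v))

/-- Base relation generating the adjacency of the Vicsek graph. -/
def vicsekRel (s : ℕ) (T : SimpleGraph V) [DecidableRel T.Adj] :
    VicsekVert s T → VicsekVert s T → Bool
  | Sum.inl u, Sum.inr (Sum.inl ⟨(a, _), _⟩) => u == a
  | Sum.inl u, Sum.inr (Sum.inr ⟨v, _⟩) => u == v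
  | Sum.inr (Sum.inl ⟨(a, b), _⟩), Sum.inr (Sum.inl ⟨(c, d), _⟩) => a == d && b == c
  | _, _ => false

/-- The Vicsek operation `V_s` applied to a graph `T` whose degrees are at most `s`:
every edge `uv` of `T` is subdivided by inserting two new vertices (so that `u` and `v`
are joined by a path of length 3) and `s - deg v` new pendant vertices are attached to
each original vertex `v`. -/
def vicsekGraph (s : ℕ) (T : SimpleGraph V) [DecidableRel T.Adj] :
    SimpleGraph (VicsekVert s T) :=
  SimpleGraph.fromRel (fun x y => vicsekRel s T x y = true)

instance (s : ℕ) (T : SimpleGraph V) [DecidableRel T.Adj] :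
    DecidableRel (vicsekGraph s T).Adj := fun x y =>
  decidable_of_iff _ (SimpleGraph.fromRel_adj _ x y).symm

end VicsekDefs

/-- The Wiener index of a finite graph: the sum of the shortest-path distances over
all unordered pairs of distinct vertices. -/
noncomputable def wienerIndex {W : Type} [Fintype W] (G : SimpleGraph W) : ℕ :=
  (∑ u, ∑ v, G.dist u v) / 2

/-- A bundled finite simple graph with decidable equality and adjacency. -/
structure FinSimpleGraph where
  V : Type
  [fintypeV : Fintype V]
  [decEqV : DecidableEq V]
  G : SimpleGraph V
  [decAdj : DecidableRel G.Adj]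

attribute [instance] FinSimpleGraph.fintypeV FinSimpleGraph.decEqV FinSimpleGraph.decAdj

/-- One application of the Vicsek operation to a bundled finite graph. -/
def vicsekStep (s : ℕ) (X : FinSimpleGraph) : FinSimpleGraph where
  V := VicsekVert s X.G
  G := vicsekGraph s X.G

/-- The `t`-fold iterate `V_s^t` of the Vicsek operation, with `V_s^0 (T) = T`. -/
def vicsekIter (s : ℕ) : ℕ → FinSimpleGraph → FinSimpleGraph
  | 0, X => X
  | t + 1, X => vicsekStep s (vicsekIter s t X)


set_option linter.unusedSectionVars false

section VicsekAux

variable {V : Type} [Fintype V] [DecidableEq V] {s : ℕ} (G : SimpleGraph V) [DecidableRel G.Adj]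

/-- Projection of a Vicsek vertex to its base vertex. -/
def vproj : VicsekVert s G → V
  | Sum.inl u => u
  | Sum.inr (Sum.inl p) => p.1.1
  | Sum.inr (Sum.inr q) => q.1

variable {G}

lemma vicsek_adj_iff {x y : VicsekVert s G} :
    (vicsekGraph s G).Adj x y ↔ x ≠ y ∧ (vicsekRel s G x y = true ∨ vicsekRel s G y x = true) :=
  SimpleGraph.fromRel_adj _ x y

lemma vproj_cases (x : VicsekVert s G) :
    x = Sum.inl (vproj G x) ∨ (vicsekGraph s G).Adj (Sum.inl (vproj G x)) x := by
  rcases x with u | p | q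
  · exact Or.inl rfl
  · right
    obtain ⟨⟨a, b⟩, h⟩ := p
    rw [vicsek_adj_iff]
    refine ⟨by simp [vproj], Or.inl ?_⟩
    show (vproj G (Sum.inr (Sum.inl ⟨(a, b), h⟩)) == a) = true
    simp [vproj]
  · right
    obtain ⟨v, i⟩ := q
    rw [vicsek_adj_iff]
    refine ⟨by simp [vproj], Or.inl ?_⟩
    show (vproj G (Sum.inr (Sum.inr ⟨v, i⟩)) == v) = true
    simp [vproj]

lemma vicsek_adj_step1 {a b : V} (h : G.Adj a b) :
    (vicsekGraph s G).Adj (Sum.inl a) (Sum.inr (Sum.inl ⟨(a, b), h⟩)) := by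
  rw [vicsek_adj_iff]
  refine ⟨by simp, Or.inl ?_⟩
  show (a == a) = true
  simp

lemma vicsek_adj_step2 {a b : V} (h : G.Adj a b) :
    (vicsekGraph s G).Adj (Sum.inr (Sum.inl ⟨(a, b), h⟩))
      (Sum.inr (Sum.inl ⟨(b, a), h.symm⟩)) := by
  rw [vicsek_adj_iff]
  refine ⟨?_, Or.inl ?_⟩
  · simp only [ne_eq, Sum.inr.injEq, Sum.inl.injEq, Subtype.mk.injEq, Prod.mk.injEq]
    rintro ⟨rfl, -⟩
    exact G.loopless.irrefl _ h
  · show (a == a && b == b) = true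
    simp

/-- Lift a walk in `G` to a walk in the Vicsek graph of triple length. -/
def liftWalk (s : ℕ) : ∀ {a b : V}, G.Walk a b → (vicsekGraph s G).Walk (Sum.inl a) (Sum.inl b)
  | _, _, SimpleGraph.Walk.nil => SimpleGraph.Walk.nil
  | _, _, SimpleGraph.Walk.cons h p =>
      SimpleGraph.Walk.cons (vicsek_adj_step1 h)
        (SimpleGraph.Walk.cons (vicsek_adj_step2 h)
          (SimpleGraph.Walk.cons ((vicsek_adj_step1 h.symm).symm) (liftWalk s p)))

lemma liftWalk_length {a b : V} (p : G.Walk a b) :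
    (liftWalk (G := G) s p).length = 3 * p.length := by
  induction p with
  | nil => rfl
  | cons h q ih =>
      simp only [liftWalk, SimpleGraph.Walk.length_cons, ih]
      ring

lemma vicsek_connected (hc : G.Connected) : (vicsekGraph s G).Connected := by
  have hreach : ∀ x : VicsekVert s G,
      (vicsekGraph s G).Reachable (Sum.inl (vproj G x)) x := by
    intro x
    rcases vproj_cases x with h | h
    · rw [← h]
    · exact h.reachable
  rw [SimpleGraph.connected_iff]
  refine ⟨?_, ⟨Sum.inl hc.nonempty.some⟩⟩
  intro x y
  refine ((hreach x).symm.trans ?_).trans (hreach y)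
  obtain ⟨p⟩ := hc (vproj G x) (vproj G y)
  exact ⟨liftWalk s p⟩

lemma vicsek_dist_inl_le (hc : G.Connected) (a b : V) :
    (vicsekGraph s G).dist (Sum.inl a) (Sum.inl b) ≤ 3 * G.dist a b := by
  obtain ⟨p, hp⟩ := (hc a b).exists_walk_length_eq_dist
  calc (vicsekGraph s G).dist (Sum.inl a) (Sum.inl b) ≤ (liftWalk s p).length :=
        SimpleGraph.dist_le _
    _ = 3 * G.dist a b := by rw [liftWalk_length, hp]

/-- Potential function used for the lower distance bound. -/
noncomputable def vpot (b : V) : VicsekVert s G → ℕ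
  | Sum.inl u => 3 * G.dist u b
  | Sum.inr (Sum.inl p) => min (3 * G.dist p.1.1 b + 1) (3 * G.dist p.1.2 b + 2)
  | Sum.inr (Sum.inr q) => 3 * G.dist q.1 b + 1

lemma adj_dist_le (hc : G.Connected) {u v : V} (h : G.Adj u v) (b : V) :
    G.dist u b ≤ G.dist v b + 1 := by
  have h1 : G.dist u v ≤ 1 := by
    simpa using SimpleGraph.dist_le h.toWalk
  calc G.dist u b ≤ G.dist u v + G.dist v b := hc.dist_triangle
    _ ≤ G.dist v b + 1 := by omega

lemma vpot_rel (hc : G.Connected) (b : V) {x y : VicsekVert s G}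
    (h : vicsekRel s G x y = true) :
    vpot b x ≤ vpot b y + 1 ∧ vpot b y ≤ vpot b x + 1 := by
  rcases x with u | p | q
  · rcases y with u' | p' | q'
    · exact absurd h (by exact Bool.false_ne_true)
    · obtain ⟨⟨a, c⟩, hac⟩ := p'
      have h' : u = a := by
        have : (u == a) = true := h
        simpa using this
      subst h'
      have h1 : G.dist u b ≤ G.dist c b + 1 := adj_dist_le hc hac b
      have h2 : G.dist c b ≤ G.dist u b + 1 := adj_dist_le hc hac.symm b
      show 3 * G.dist u b ≤ min (3 * G.dist u b + 1) (3 * G.dist c b + 2) + 1 ∧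
        min (3 * G.dist u b + 1) (3 * G.dist c b + 2) ≤ 3 * G.dist u b + 1
      omega
    · obtain ⟨w, i⟩ := q'
      have h' : u = w := by
        have : (u == w) = true := h
        simpa using this
      subst h'
      show 3 * G.dist u b ≤ (3 * G.dist u b + 1) + 1 ∧ 3 * G.dist u b + 1 ≤ 3 * G.dist u b + 1
      omega
  · rcases y with u' | p' | q'
    · exact absurd h (by exact Bool.false_ne_true)
    · obtain ⟨⟨a, c⟩, hac⟩ := p
      obtain ⟨⟨d, e⟩, hde⟩ := p'
      have h' : a = e ∧ c = d := by
        have : (a == e && c == d) = true := h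
        simpa using this
      obtain ⟨rfl, rfl⟩ := h'
      have h1 : G.dist a b ≤ G.dist c b + 1 := adj_dist_le hc hac b
      have h2 : G.dist c b ≤ G.dist a b + 1 := adj_dist_le hc hac.symm b
      show min (3 * G.dist a b + 1) (3 * G.dist c b + 2) ≤
          min (3 * G.dist c b + 1) (3 * G.dist a b + 2) + 1 ∧
        min (3 * G.dist c b + 1) (3 * G.dist a b + 2) ≤
          min (3 * G.dist a b + 1) (3 * G.dist c b + 2) + 1
      omega
    · exact absurd h (by exact Bool.false_ne_true)
  · rcases y with u' | p' | q'
    · exact absurd h (by exact Bool.false_ne_true)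
    · exact absurd h (by exact Bool.false_ne_true)
    · exact absurd h (by exact Bool.false_ne_true)

lemma vpot_lipschitz (hc : G.Connected) (b : V) {x y : VicsekVert s G}
    (h : (vicsekGraph s G).Adj x y) : vpot b x ≤ vpot b y + 1 := by
  rw [vicsek_adj_iff] at h
  rcases h.2 with h' | h'
  · exact (vpot_rel hc b h').1
  · exact (vpot_rel hc b h').2

lemma vpot_le_length (hc : G.Connected) {x y : VicsekVert s G}
    (p : (vicsekGraph s G).Walk x y) : ∀ {b : V}, y = Sum.inl b → vpot b x ≤ p.length := by
  induction p with
  | nil =>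
      rintro b rfl
      show 3 * G.dist b b ≤ 0
      simp [SimpleGraph.dist_self]
  | cons h q ih =>
      rintro b rfl
      have h1 := vpot_lipschitz hc b h
      have h2 := ih rfl
      simp only [SimpleGraph.Walk.length_cons]
      omega

lemma vicsek_dist_inl (hc : G.Connected) (a b : V) :
    (vicsekGraph s G).dist (Sum.inl a) (Sum.inl b) = 3 * G.dist a b := by
  refine le_antisymm (vicsek_dist_inl_le hc a b) ?_
  obtain ⟨p, hp⟩ :=
    ((vicsek_connected hc) (Sum.inl a) (Sum.inl b)).exists_walk_length_eq_dist
  have h := vpot_le_length hc p rfl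
  rw [hp] at h
  exact h

lemma vicsek_dist_inl_vproj_le (hc : G.Connected) (x : VicsekVert s G) :
    (vicsekGraph s G).dist (Sum.inl (vproj G x)) x ≤ 1 := by
  rcases vproj_cases x with h | h
  · rw [← h]; simp [SimpleGraph.dist_self]
  · simpa using SimpleGraph.dist_le h.toWalk

lemma vicsek_dist_le (hc : G.Connected) (x y : VicsekVert s G) :
    (vicsekGraph s G).dist x y ≤ 3 * G.dist (vproj G x) (vproj G y) + 2 := by
  have Hc := vicsek_connected (s := s) hc
  have h1 := vicsek_dist_inl_vproj_le hc x
  have h2 := vicsek_dist_inl_vproj_le hc y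
  have t1 : (vicsekGraph s G).dist x y ≤
      (vicsekGraph s G).dist x (Sum.inl (vproj G x)) +
      (vicsekGraph s G).dist (Sum.inl (vproj G x)) y := Hc.dist_triangle
  have t2 : (vicsekGraph s G).dist (Sum.inl (vproj G x)) y ≤
      (vicsekGraph s G).dist (Sum.inl (vproj G x)) (Sum.inl (vproj G y)) +
      (vicsekGraph s G).dist (Sum.inl (vproj G y)) y := Hc.dist_triangle
  have hd := vicsek_dist_inl (s := s) hc (vproj G x) (vproj G y)
  rw [SimpleGraph.dist_comm] at h1
  omega

lemma vicsek_dist_ge (hc : G.Connected) (x y : VicsekVert s G) :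
    3 * G.dist (vproj G x) (vproj G y) ≤ (vicsekGraph s G).dist x y + 2 := by
  have Hc := vicsek_connected (s := s) hc
  have h1 := vicsek_dist_inl_vproj_le hc x
  have h2 := vicsek_dist_inl_vproj_le hc y
  have t1 : (vicsekGraph s G).dist (Sum.inl (vproj G x)) (Sum.inl (vproj G y)) ≤
      (vicsekGraph s G).dist (Sum.inl (vproj G x)) x +
      (vicsekGraph s G).dist x (Sum.inl (vproj G y)) := Hc.dist_triangle
  have t2 : (vicsekGraph s G).dist x (Sum.inl (vproj G y)) ≤
      (vicsekGraph s G).dist x y +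
      (vicsekGraph s G).dist y (Sum.inl (vproj G y)) := Hc.dist_triangle
  have hd := vicsek_dist_inl (s := s) hc (vproj G x) (vproj G y)
  rw [SimpleGraph.dist_comm] at h2
  omega

end VicsekAux

section VicsekCount

variable {V : Type} [Fintype V] [DecidableEq V] {s : ℕ} {G : SimpleGraph V} [DecidableRel G.Adj]

lemma vicsek_sum_fiber (hdeg : ∀ v, G.degree v ≤ s) (g : V → ℕ) :
    ∑ x : VicsekVert s G, g (vproj G x) = (s + 1) * ∑ v, g v := by
  rw [Fintype.sum_sum_type, Fintype.sum_sum_type]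
  have hB : ∑ p : {p : V × V // G.Adj p.1 p.2}, g p.1.1 = ∑ v, G.degree v * g v := by
    rw [← Finset.sum_subtype (Finset.univ.filter (fun p : V × V => G.Adj p.1 p.2))
      (by intro x; simp) (fun p : V × V => g p.1)]
    rw [Finset.sum_filter, ← Finset.univ_product_univ, Finset.sum_product]
    refine Finset.sum_congr rfl fun u _ => ?_
    have e : ∀ v : V, (if G.Adj u v then g (u, v).1 else 0) = if G.Adj u v then g u else 0 :=
      fun v => rfl
    rw [Finset.sum_congr rfl fun v _ => e v, ← Finset.sum_filter,
      ← SimpleGraph.neighborFinset_eq_filter, Finset.sum_const, smul_eq_mul]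
    rfl
  have hC : ∑ q : (v : V) × Fin (s - G.degree v), g q.1 = ∑ v, (s - G.degree v) * g v := by
    rw [← Finset.univ_sigma_univ, Finset.sum_sigma]
    refine Finset.sum_congr rfl fun v _ => ?_
    have e : ∀ i : Fin (s - G.degree v), g (⟨v, i⟩ : (v : V) × Fin (s - G.degree v)).fst = g v :=
      fun i => rfl
    rw [Finset.sum_congr rfl fun i _ => e i, Finset.sum_const, Finset.card_univ,
      Fintype.card_fin, smul_eq_mul]
  simp only [vproj]
  rw [hB, hC, ← Finset.sum_add_distrib]
  have : ∀ v : V, G.degree v * g v + (s - G.degree v) * g v = s * g v := by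
    intro v
    have := hdeg v
    rw [← Nat.add_mul]
    congr 1
    omega
  rw [Finset.sum_congr rfl (fun v _ => this v), ← Finset.mul_sum]
  ring

lemma vicsek_card (hdeg : ∀ v, G.degree v ≤ s) :
    Fintype.card (VicsekVert s G) = (s + 1) * Fintype.card V := by
  have h := vicsek_sum_fiber hdeg (fun _ => 1)
  simp only [Finset.sum_const, Finset.card_univ, smul_eq_mul, mul_one] at h
  exact h

lemma vicsek_sum_fiber2 (hdeg : ∀ v, G.degree v ≤ s) (F : V → V → ℕ) :
    ∑ x : VicsekVert s G, ∑ y : VicsekVert s G, F (vproj G x) (vproj G y)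
      = (s + 1) ^ 2 * ∑ a, ∑ b, F a b := by
  rw [vicsek_sum_fiber hdeg (fun a => ∑ y : VicsekVert s G, F a (vproj G y))]
  have : ∀ a : V, ∑ y : VicsekVert s G, F a (vproj G y) = (s + 1) * ∑ b, F a b :=
    fun a => vicsek_sum_fiber hdeg (F a)
  rw [Finset.sum_congr rfl (fun a _ => this a), ← Finset.mul_sum]
  ring

lemma vicsek_degree_le (hs : 2 ≤ s) (hdeg : ∀ v, G.degree v ≤ s) (x : VicsekVert s G) :
    (vicsekGraph s G).degree x ≤ s := by
  rw [← SimpleGraph.card_neighborFinset_eq_degree]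
  rcases x with u | p | q
  · have hsub : (vicsekGraph s G).neighborFinset (Sum.inl u) ⊆
        (G.neighborFinset u).attach.image
          (fun b => (Sum.inr (Sum.inl ⟨(u, b.1), by
            simpa using (SimpleGraph.mem_neighborFinset G u b.1).1 b.2⟩) : VicsekVert s G)) ∪
        (Finset.univ : Finset (Fin (s - G.degree u))).image
          (fun i => (Sum.inr (Sum.inr ⟨u, i⟩) : VicsekVert s G)) := by
      intro y hy
      rw [SimpleGraph.mem_neighborFinset, vicsek_adj_iff] at hy
      have hrel : vicsekRel s G (Sum.inl u) y = true := by
        rcases hy.2 with h' | h'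
        · exact h'
        · exfalso
          rcases y with u' | p' | q'
          · exact Bool.false_ne_true h'
          · obtain ⟨⟨a, c⟩, hac⟩ := p'
            exact Bool.false_ne_true h'
          · obtain ⟨w, i⟩ := q'
            exact Bool.false_ne_true h'
      rcases y with u' | p' | q'
      · exact absurd hrel Bool.false_ne_true
      · obtain ⟨⟨a, c⟩, hac⟩ := p'
        have ha : u = a := by
          have : (u == a) = true := hrel
          simpa using this
        subst ha
        refine Finset.mem_union_left _ (Finset.mem_image.2 ?_)
        refine ⟨⟨c, (SimpleGraph.mem_neighborFinset G u c).2 hac⟩, Finset.mem_attach _ _, rfl⟩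
      · obtain ⟨w, i⟩ := q'
        have hw : u = w := by
          have : (u == w) = true := hrel
          simpa using this
        subst hw
        exact Finset.mem_union_right _ (Finset.mem_image.2 ⟨i, Finset.mem_univ _, rfl⟩)
    calc ((vicsekGraph s G).neighborFinset (Sum.inl u)).card ≤ _ :=
          Finset.card_le_card hsub
      _ ≤ _ + _ := Finset.card_union_le _ _
      _ ≤ G.degree u + (s - G.degree u) := by
          gcongr
          · exact (Finset.card_image_le).trans (by simp)
          · exact (Finset.card_image_le).trans (by simp)
      _ ≤ s := by have := hdeg u; omega
  · obtain ⟨⟨a, c⟩, hac⟩ := p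
    have hsub : (vicsekGraph s G).neighborFinset (Sum.inr (Sum.inl ⟨(a, c), hac⟩)) ⊆
        {Sum.inl a, Sum.inr (Sum.inl ⟨(c, a), hac.symm⟩)} := by
      intro y hy
      rw [SimpleGraph.mem_neighborFinset, vicsek_adj_iff] at hy
      rcases y with u' | p' | q'
      · rcases hy.2 with h' | h'
        · exact absurd h' Bool.false_ne_true
        · have : (u' == a) = true := h'
          simp only [beq_iff_eq] at this
          subst this
          exact Finset.mem_insert_self _ _
      · obtain ⟨⟨d, e⟩, hde⟩ := p'
        have hde' : d = c ∧ e = a := by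
          rcases hy.2 with h' | h'
          · have : (a == e && c == d) = true := h'
            simp only [Bool.and_eq_true, beq_iff_eq] at this
            exact ⟨this.2.symm, this.1.symm⟩
          · have : (d == c && e == a) = true := h'
            simp only [Bool.and_eq_true, beq_iff_eq] at this
            exact this
        obtain ⟨rfl, rfl⟩ := hde'
        simp
      · obtain ⟨w, i⟩ := q'
        exfalso
        rcases hy.2 with h' | h'
        · exact Bool.false_ne_true h'
        · exact Bool.false_ne_true h'
    calc ((vicsekGraph s G).neighborFinset _).card ≤ _ := Finset.card_le_card hsub
      _ ≤ 2 := Finset.card_insert_le _ _ |>.trans (by simp)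
      _ ≤ s := hs
  · obtain ⟨w, i⟩ := q
    have hsub : (vicsekGraph s G).neighborFinset (Sum.inr (Sum.inr ⟨w, i⟩)) ⊆
        {Sum.inl w} := by
      intro y hy
      rw [SimpleGraph.mem_neighborFinset, vicsek_adj_iff] at hy
      rcases y with u' | p' | q'
      · rcases hy.2 with h' | h'
        · exact absurd h' Bool.false_ne_true
        · have : (u' == w) = true := h'
          simp only [beq_iff_eq] at this
          subst this
          exact Finset.mem_singleton_self _
      · obtain ⟨⟨d, e⟩, hde⟩ := p'
        exact absurd (hy.2.resolve_left (by exact Bool.false_ne_true))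
          (by exact Bool.false_ne_true)
      · obtain ⟨w', i'⟩ := q'
        exact absurd (hy.2.resolve_left (by exact Bool.false_ne_true))
          (by exact Bool.false_ne_true)
    calc ((vicsekGraph s G).neighborFinset _).card ≤ _ := Finset.card_le_card hsub
      _ ≤ s := by simpa using Nat.one_le_of_lt hs

lemma card_ball_le {W : Type} [Fintype W] [DecidableEq W] (H : SimpleGraph W)
    [DecidableRel H.Adj] (hc : H.Connected) (x : W) :
    (Finset.univ.filter (fun y => H.dist x y ≤ 1)).card ≤ H.degree x + 1 := by
  have hsub : Finset.univ.filter (fun y => H.dist x y ≤ 1) ⊆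
      insert x (H.neighborFinset x) := by
    intro y hy
    rw [Finset.mem_filter] at hy
    rcases Nat.le_one_iff_eq_zero_or_eq_one.1 hy.2 with h | h
    · rw [hc.dist_eq_zero_iff] at h
      simp [h]
    · rw [SimpleGraph.dist_eq_one_iff_adj] at h
      rw [Finset.mem_insert, SimpleGraph.mem_neighborFinset]
      exact Or.inr h
  calc _ ≤ _ := Finset.card_le_card hsub
    _ ≤ (H.neighborFinset x).card + 1 := Finset.card_insert_le _ _
    _ = H.degree x + 1 := by rw [SimpleGraph.card_neighborFinset_eq_degree]

end VicsekCount

/-- Sum of all pairwise distances (ordered pairs). -/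
noncomputable def Dsum (X : FinSimpleGraph) : ℕ := ∑ u, ∑ v, X.G.dist u v

lemma Dsum_step_eq (s : ℕ) (X : FinSimpleGraph) :
    Dsum (vicsekStep s X) =
      ∑ x : VicsekVert s X.G, ∑ y : VicsekVert s X.G, (vicsekGraph s X.G).dist x y := rfl

lemma Dsum_step_le (s : ℕ) (X : FinSimpleGraph) (hc : X.G.Connected)
    (hdeg : ∀ v, X.G.degree v ≤ s) :
    Dsum (vicsekStep s X) ≤ (s + 1) ^ 2 * (3 * Dsum X + 2 * Fintype.card X.V ^ 2) := by
  rw [Dsum_step_eq]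
  calc ∑ x : VicsekVert s X.G, ∑ y : VicsekVert s X.G, (vicsekGraph s X.G).dist x y
      ≤ ∑ x : VicsekVert s X.G, ∑ y : VicsekVert s X.G,
        (3 * X.G.dist (vproj X.G x) (vproj X.G y) + 2) := by
        refine Finset.sum_le_sum fun x _ => Finset.sum_le_sum fun y _ => ?_
        exact vicsek_dist_le hc x y
    _ = (s + 1) ^ 2 * ∑ a, ∑ b, (3 * X.G.dist a b + 2) :=
        vicsek_sum_fiber2 hdeg (fun a b => 3 * X.G.dist a b + 2)
    _ = (s + 1) ^ 2 * (3 * Dsum X + 2 * Fintype.card X.V ^ 2) := by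
        congr 1
        rw [Dsum, Finset.mul_sum]
        rw [Finset.sum_congr rfl fun a (_ : a ∈ Finset.univ) => Finset.mul_sum Finset.univ (X.G.dist a) 3]
        simp only [Finset.sum_add_distrib, Finset.sum_const, Finset.card_univ, smul_eq_mul]
        ring

lemma Dsum_step_ge (s : ℕ) (X : FinSimpleGraph) (hc : X.G.Connected)
    (hdeg : ∀ v, X.G.degree v ≤ s) :
    (s + 1) ^ 2 * (3 * Dsum X) ≤
      Dsum (vicsekStep s X) + 2 * ((s + 1) * Fintype.card X.V) ^ 2 := by
  rw [Dsum_step_eq]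
  have key : (s + 1) ^ 2 * (3 * Dsum X)
      = ∑ x : VicsekVert s X.G, ∑ y : VicsekVert s X.G,
          3 * X.G.dist (vproj X.G x) (vproj X.G y) := by
    rw [vicsek_sum_fiber2 hdeg (fun a b => 3 * X.G.dist a b)]
    congr 1
    rw [Dsum, Finset.mul_sum]
    exact Finset.sum_congr rfl fun a _ => Finset.mul_sum Finset.univ (X.G.dist a) 3
  rw [key]
  calc ∑ x : VicsekVert s X.G, ∑ y : VicsekVert s X.G,
        3 * X.G.dist (vproj X.G x) (vproj X.G y)
      ≤ ∑ x : VicsekVert s X.G, ∑ y : VicsekVert s X.G,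
        ((vicsekGraph s X.G).dist x y + 2) := by
        refine Finset.sum_le_sum fun x _ => Finset.sum_le_sum fun y _ => ?_
        exact vicsek_dist_ge hc x y
    _ = (∑ x : VicsekVert s X.G, ∑ y : VicsekVert s X.G, (vicsekGraph s X.G).dist x y)
        + 2 * ((s + 1) * Fintype.card X.V) ^ 2 := by
        simp only [Finset.sum_add_distrib, Finset.sum_const, Finset.card_univ, smul_eq_mul]
        rw [vicsek_card hdeg]
        ring

lemma Dsum_even (X : FinSimpleGraph) : 2 ∣ Dsum X := by
  rw [← ZMod.natCast_eq_zero_iff]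
  rw [Dsum]
  push_cast
  rw [← Finset.sum_product']
  refine Finset.sum_involution (fun p _ => p.swap) ?_ ?_ (fun p hp => Finset.mem_univ _) ?_
  · intro p _
    have h : ((X.G.dist p.swap.1 p.swap.2 : ℕ) : ZMod 2)
        = ((X.G.dist p.1 p.2 : ℕ) : ZMod 2) := by
      rw [Prod.fst_swap, Prod.snd_swap, SimpleGraph.dist_comm]
    show ((X.G.dist p.1 p.2 : ℕ) : ZMod 2) + ((X.G.dist p.swap.1 p.swap.2 : ℕ) : ZMod 2) = 0
    rw [h]
    exact CharTwo.add_self_eq_zero _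
  · intro p _ hf
    intro hsw
    apply hf
    have h1 : p.2 = p.1 := congrArg Prod.fst hsw
    show ((X.G.dist p.1 p.2 : ℕ) : ZMod 2) = 0
    rw [h1, SimpleGraph.dist_self]
    simp
  · intro p _
    exact Prod.swap_swap p

lemma two_mul_wienerIndex (X : FinSimpleGraph) : 2 * wienerIndex X.G = Dsum X :=
  Nat.mul_div_cancel' (Dsum_even X)

section Iterate

variable {s n : ℕ}

lemma vicsekIter_succ (s t : ℕ) (X : FinSimpleGraph) :
    vicsekIter s (t + 1) X = vicsekStep s (vicsekIter s t X) := rfl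

lemma iter_inv (hs : 2 ≤ s) (X0 : FinSimpleGraph) (hc0 : X0.G.Connected)
    (hdeg0 : ∀ v, X0.G.degree v ≤ s) (hcard0 : Fintype.card X0.V = n) (t : ℕ) :
    (vicsekIter s t X0).G.Connected ∧ (∀ v, (vicsekIter s t X0).G.degree v ≤ s) ∧
      Fintype.card (vicsekIter s t X0).V = n * (s + 1) ^ t := by
  induction t with
  | zero =>
      refine ⟨hc0, hdeg0, ?_⟩
      show Fintype.card X0.V = n * (s + 1) ^ 0
      simpa using hcard0
  | succ t ih =>
      obtain ⟨hc, hdeg, hcard⟩ := ih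
      rw [vicsekIter_succ]
      refine ⟨vicsek_connected hc, vicsek_degree_le hs hdeg, ?_⟩
      show Fintype.card (VicsekVert s (vicsekIter s t X0).G) = _
      rw [vicsek_card hdeg, hcard]
      ring

lemma iter_dist_le (hs : 2 ≤ s) (X0 : FinSimpleGraph) (hc0 : X0.G.Connected)
    (hdeg0 : ∀ v, X0.G.degree v ≤ s) (hcard0 : Fintype.card X0.V = n) (hn2 : 2 ≤ n)
    (t : ℕ) (x y : (vicsekIter s t X0).V) :
    (vicsekIter s t X0).G.dist x y ≤ n * 3 ^ t - 1 := by
  induction t with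
  | zero =>
      obtain ⟨p, hp, hl⟩ := (hc0 x y).exists_path_of_dist
      have h := hp.length_lt
      rw [hl, hcard0] at h
      have hb : (vicsekIter s 0 X0).G.dist x y = X0.G.dist x y := rfl
      omega
  | succ t ih =>
      obtain ⟨hc, hdeg, hcard⟩ := iter_inv hs X0 hc0 hdeg0 hcard0 t
      have h1 : (vicsekIter s (t+1) X0).G.dist x y ≤
          3 * (vicsekIter s t X0).G.dist (vproj _ x) (vproj _ y) + 2 :=
        vicsek_dist_le hc x y
      have h2 := ih (vproj _ x) (vproj _ y)
      have h3 : 1 ≤ n * 3 ^ t :=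
        Nat.one_le_iff_ne_zero.2 (by positivity)
      have h4 : n * 3 ^ (t + 1) = 3 * (n * 3 ^ t) := by ring
      omega

lemma Dsum_iter_le (hs : 2 ≤ s) (X0 : FinSimpleGraph) (hc0 : X0.G.Connected)
    (hdeg0 : ∀ v, X0.G.degree v ≤ s) (hcard0 : Fintype.card X0.V = n) (hn2 : 2 ≤ n)
    (t : ℕ) :
    Dsum (vicsekIter s t X0) ≤ (n * (s + 1) ^ t) ^ 2 * (n * 3 ^ t) := by
  obtain ⟨hc, hdeg, hcard⟩ := iter_inv hs X0 hc0 hdeg0 hcard0 t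
  rw [Dsum]
  calc ∑ u, ∑ v, (vicsekIter s t X0).G.dist u v
      ≤ ∑ _u : (vicsekIter s t X0).V, ∑ _v : (vicsekIter s t X0).V, (n * 3 ^ t) := by
        refine Finset.sum_le_sum fun u _ => Finset.sum_le_sum fun v _ => ?_
        have := iter_dist_le hs X0 hc0 hdeg0 hcard0 hn2 t u v
        omega
    _ = (n * (s + 1) ^ t) ^ 2 * (n * 3 ^ t) := by
        simp only [Finset.sum_const, Finset.card_univ, smul_eq_mul, hcard]
        ring

lemma Dsum_step_one_ge (hs : 2 ≤ s) (hn2 : 2 ≤ n) (X : FinSimpleGraph)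
    (hc : X.G.Connected) (hdeg : ∀ v, X.G.degree v ≤ s)
    (hcard : Fintype.card X.V = n) :
    (n * (s + 1)) * (n * (s + 1)) + (n * n - n) ≤ Dsum (vicsekStep s X) := by
  classical
  set H := vicsekGraph s X.G with hH
  have hcH : H.Connected := vicsek_connected hc
  have hN1 : Fintype.card (VicsekVert s X.G) = (s + 1) * n := by
    rw [vicsek_card hdeg, hcard]
  set N1 := n * (s + 1) with hN1def
  have hcard1 : Fintype.card (VicsekVert s X.G) = N1 := by rw [hN1, hN1def]; ring
  -- the pair sets
  set P : Finset (VicsekVert s X.G × VicsekVert s X.G) := Finset.univ ×ˢ Finset.univ with hP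
  set S2 : Finset (VicsekVert s X.G × VicsekVert s X.G) :=
    P.filter (fun p => 2 ≤ H.dist p.1 p.2) with hS2
  set S3 : Finset (VicsekVert s X.G × VicsekVert s X.G) :=
    (Finset.univ.offDiag : Finset (X.V × X.V)).image
      (fun q => (Sum.inl q.1, Sum.inl q.2)) with hS3
  have hsub33 : S3 ⊆ S2 := by
    intro p hp
    rw [hS3, Finset.mem_image] at hp
    obtain ⟨q, hq, rfl⟩ := hp
    rw [Finset.mem_offDiag] at hq
    rw [hS2, Finset.mem_filter]
    refine ⟨by simp [hP], ?_⟩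
    show 2 ≤ H.dist (Sum.inl q.1) (Sum.inl q.2)
    rw [hH, vicsek_dist_inl hc]
    have : X.G.dist q.1 q.2 ≠ 0 := fun h0 => hq.2.2 (hc.dist_eq_zero_iff.1 h0)
    omega
  have hS3card : S3.card = n * n - n := by
    rw [hS3, Finset.card_image_of_injective _ (by
      intro a b hab
      simp only [Prod.mk.injEq, Sum.inl.injEq] at hab
      exact Prod.ext hab.1 hab.2), Finset.offDiag_card, Finset.card_univ, hcard]
  -- complement count
  have hsplit : S2.card + (P.filter (fun p => ¬ 2 ≤ H.dist p.1 p.2)).card = N1 * N1 := by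
    rw [hS2, Finset.card_filter_add_card_filter_not, hP, Finset.card_product,
      Finset.card_univ, hcard1]
  have hcompl : (P.filter (fun p => ¬ 2 ≤ H.dist p.1 p.2)).card ≤ N1 * (s + 1) := by
    have heq : (P.filter (fun p => ¬ 2 ≤ H.dist p.1 p.2)).card
        = ∑ x : VicsekVert s X.G,
            (Finset.univ.filter (fun y => H.dist x y ≤ 1)).card := by
      have hcond : ∀ d : ℕ, (¬ 2 ≤ d) ↔ d ≤ 1 := fun d => by omega
      rw [Finset.card_filter, hP, Finset.sum_product]
      refine Finset.sum_congr rfl fun x _ => ?_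
      rw [Finset.card_filter]
      exact Finset.sum_congr rfl fun y _ => by simp [hcond]
    rw [heq]
    calc ∑ x : VicsekVert s X.G, (Finset.univ.filter (fun y => H.dist x y ≤ 1)).card
        ≤ ∑ _x : VicsekVert s X.G, (s + 1) := by
          refine Finset.sum_le_sum fun x _ => ?_
          have hb := card_ball_le H hcH x
          have hd : H.degree x ≤ s := vicsek_degree_le hs hdeg x
          omega
      _ = N1 * (s + 1) := by
          rw [Finset.sum_const, Finset.card_univ, hcard1, smul_eq_mul]
  -- sum lower bounds
  have hDsum : Dsum (vicsekStep s X) = ∑ p ∈ P, H.dist p.1 p.2 := by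
    rw [Dsum_step_eq, hP, Finset.sum_product']
  have hge2 : ∀ p ∈ S2 \ S3, 2 ≤ H.dist p.1 p.2 := by
    intro p hp
    have := (Finset.mem_sdiff.1 hp).1
    rw [hS2, Finset.mem_filter] at this
    exact this.2
  have hge3 : ∀ p ∈ S3, 3 ≤ H.dist p.1 p.2 := by
    intro p hp
    rw [hS3, Finset.mem_image] at hp
    obtain ⟨q, hq, rfl⟩ := hp
    rw [Finset.mem_offDiag] at hq
    show 3 ≤ H.dist (Sum.inl q.1) (Sum.inl q.2)
    rw [hH, vicsek_dist_inl hc]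
    have : X.G.dist q.1 q.2 ≠ 0 := fun h0 => hq.2.2 (hc.dist_eq_zero_iff.1 h0)
    omega
  have hsum2 : (S2 \ S3).card * 2 ≤ ∑ p ∈ S2 \ S3, H.dist p.1 p.2 := by
    simpa using Finset.card_nsmul_le_sum (S2 \ S3) (fun p => H.dist p.1 p.2) 2 hge2
  have hsum3 : S3.card * 3 ≤ ∑ p ∈ S3, H.dist p.1 p.2 := by
    simpa using Finset.card_nsmul_le_sum S3 (fun p => H.dist p.1 p.2) 3 hge3
  have hsdiffcard : (S2 \ S3).card + S3.card = S2.card :=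
    Finset.card_sdiff_add_card_eq_card hsub33
  have hsumS2 : ∑ p ∈ S2 \ S3, H.dist p.1 p.2 + ∑ p ∈ S3, H.dist p.1 p.2
      = ∑ p ∈ S2, H.dist p.1 p.2 := Finset.sum_sdiff hsub33
  have hS2leP : ∑ p ∈ S2, H.dist p.1 p.2 ≤ ∑ p ∈ P, H.dist p.1 p.2 :=
    Finset.sum_le_sum_of_subset (Finset.filter_subset _ _)
  -- final arithmetic
  have hkey : 2 * (s + 1) * N1 ≤ N1 * N1 := by
    rw [hN1def]
    calc 2 * (s + 1) * (n * (s + 1)) ≤ n * (s + 1) * (n * (s + 1)) := by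
          apply Nat.mul_le_mul_right
          exact Nat.mul_le_mul_right _ hn2
      _ = _ := rfl
  have hm : (n * n - n) + n = n * n := by
    have : n ≤ n * n := Nat.le_mul_of_pos_left n (by omega)
    omega
  have hmle : n * n - n ≤ S2.card := hS3card ▸ Finset.card_le_card hsub33
  linarith [hsum2, hsum3, hsdiffcard, hsumS2, hS2leP, hsplit, hcompl, hkey, hDsum,
    hS3card]

lemma Dsum_iter_ge (hs : 2 ≤ s) (hn2 : 2 ≤ n) (X0 : FinSimpleGraph)
    (hc0 : X0.G.Connected) (hdeg0 : ∀ v, X0.G.degree v ≤ s)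
    (hcard0 : Fintype.card X0.V = n) (t : ℕ) :
    (n * (s + 1) ^ (t + 1)) ^ 2 * ((n * (s + 1)) ^ 2 + 3 ^ t * (n * n - n))
      ≤ (n * (s + 1)) ^ 2 * Dsum (vicsekIter s (t + 1) X0) := by
  induction t with
  | zero =>
      have hbase := Dsum_step_one_ge hs hn2 X0 hc0 hdeg0 hcard0
      rw [vicsekIter_succ]
      calc (n * (s + 1) ^ (0 + 1)) ^ 2 * ((n * (s + 1)) ^ 2 + 3 ^ 0 * (n * n - n))
          = (n * (s + 1)) ^ 2 * ((n * (s + 1)) * (n * (s + 1)) + (n * n - n)) := by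
            ring
        _ ≤ (n * (s + 1)) ^ 2 * Dsum (vicsekStep s (vicsekIter s 0 X0)) :=
            Nat.mul_le_mul_left _ hbase
  | succ t ih =>
      obtain ⟨hc, hdeg, hcard⟩ := iter_inv hs X0 hc0 hdeg0 hcard0 (t + 1)
      have h1 := Dsum_step_ge s (vicsekIter s (t + 1) X0) hc hdeg
      rw [hcard] at h1
      rw [vicsekIter_succ s (t + 1)]
      have main : (n * (s + 1) ^ (t + 2)) ^ 2 * ((n * (s + 1)) ^ 2 + 3 ^ (t + 1) * (n * n - n))
            + 2 * ((s + 1) * (n * (s + 1) ^ (t + 1))) ^ 2 * (n * (s + 1)) ^ 2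
          ≤ (n * (s + 1)) ^ 2 * Dsum (vicsekStep s (vicsekIter s (t + 1) X0))
            + 2 * ((s + 1) * (n * (s + 1) ^ (t + 1))) ^ 2 * (n * (s + 1)) ^ 2 := by
        calc (n * (s + 1) ^ (t + 2)) ^ 2 * ((n * (s + 1)) ^ 2 + 3 ^ (t + 1) * (n * n - n))
              + 2 * ((s + 1) * (n * (s + 1) ^ (t + 1))) ^ 2 * (n * (s + 1)) ^ 2
            = 3 * (s + 1) ^ 2 *
                ((n * (s + 1) ^ (t + 1)) ^ 2 * ((n * (s + 1)) ^ 2 + 3 ^ t * (n * n - n))) := by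
              ring
          _ ≤ 3 * (s + 1) ^ 2 * ((n * (s + 1)) ^ 2 * Dsum (vicsekIter s (t + 1) X0)) :=
              Nat.mul_le_mul_left _ ih
          _ = (n * (s + 1)) ^ 2 * ((s + 1) ^ 2 * (3 * Dsum (vicsekIter s (t + 1) X0))) := by
              ring
          _ ≤ (n * (s + 1)) ^ 2 *
                (Dsum (vicsekStep s (vicsekIter s (t + 1) X0))
                  + 2 * ((s + 1) * (n * (s + 1) ^ (t + 1))) ^ 2) :=
              Nat.mul_le_mul_left _ h1
          _ = (n * (s + 1)) ^ 2 * Dsum (vicsekStep s (vicsekIter s (t + 1) X0))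
              + 2 * ((s + 1) * (n * (s + 1) ^ (t + 1))) ^ 2 * (n * (s + 1)) ^ 2 := by
              ring
      exact Nat.le_of_add_le_add_right main

end Iterate

section Limit

open Filter Real

lemma lim_ratio (a c d b : ℝ) (hb : 0 < b) :
    Tendsto (fun t : ℕ => (a + (t : ℝ) * c) / (d + (t : ℝ) * b)) atTop (nhds (c / b)) := by
  have h1 : Tendsto (fun t : ℕ => a / (t : ℝ) + c) atTop (nhds (0 + c)) :=
    (tendsto_const_div_atTop_nhds_zero_nat a).add_const c
  have h2 : Tendsto (fun t : ℕ => d / (t : ℝ) + b) atTop (nhds (0 + b)) :=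
    (tendsto_const_div_atTop_nhds_zero_nat d).add_const b
  have h3 : Tendsto (fun t : ℕ => (a / (t : ℝ) + c) / (d / (t : ℝ) + b)) atTop
      (nhds ((0 + c) / (0 + b))) :=
    Tendsto.div h1 h2 (by simp; linarith)
  have h4 : ((0 : ℝ) + c) / (0 + b) = c / b := by norm_num
  rw [h4] at h3
  refine Tendsto.congr' ?_ h3
  filter_upwards [eventually_ge_atTop 1] with t ht
  have ht' : (t : ℝ) ≠ 0 := by
    have : (1 : ℝ) ≤ (t : ℝ) := by exact_mod_cast ht
    linarith
  rw [div_add' _ _ _ ht', div_add' _ _ _ ht', div_div_div_cancel_right₀]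
  · ring_nf
  · exact ht'

lemma lim_main (a c d b : ℝ) (hb : 0 < b) :
    Tendsto (fun t : ℕ => (a + (d + (t : ℝ) * b) + (t : ℝ) * c) / (d + (t : ℝ) * b)) atTop
      (nhds (1 + c / b)) := by
  have h0 : Tendsto (fun t : ℕ => 1 + (a + (t : ℝ) * c) / (d + (t : ℝ) * b)) atTop
      (nhds (1 + c / b)) := by
    have := lim_ratio a c d b hb
    exact (tendsto_const_nhds.add this)
  refine Tendsto.congr' ?_ h0
  have hden : Tendsto (fun t : ℕ => d + (t : ℝ) * b) atTop atTop := by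
    apply Filter.tendsto_atTop_add_const_left
    exact Tendsto.atTop_mul_const hb tendsto_natCast_atTop_atTop
  filter_upwards [hden.eventually_gt_atTop 0] with t ht
  have hne : d + (t : ℝ) * b ≠ 0 := ne_of_gt ht
  field_simp
  ring

end Limit

open Filter Real

/-- scaling relation. For a tree `T` with `n ≥ 2` vertices, all of
degree at most `s ≥ 2`, setting `A_t = 2·W(V_s^t(T))/(n(s+1)^t)` and `N_t = n(s+1)^t`,
the ratio `log A_t / log N_t` converges as `t → ∞` to `λ = 1 + log 3 / log (s+1)`;
in particular the limit does not depend on the seed tree `T`. -/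
theorem vicsekIter_scaling_exponent {V : Type} [Fintype V] [DecidableEq V]
    (s n : ℕ) (hs : 2 ≤ s) (T : SimpleGraph V) [DecidableRel T.Adj]
    (hT : T.IsTree) (hn : Fintype.card V = n) (hn2 : 2 ≤ n)
    (hdeg : ∀ v : V, T.degree v ≤ s) :
    Filter.Tendsto
      (fun t : ℕ =>
        Real.log (2 * (wienerIndex (vicsekIter s t { V := V, G := T }).G : ℝ)
            / ((n : ℝ) * ((s : ℝ) + 1) ^ t))
          / Real.log ((n : ℝ) * ((s : ℝ) + 1) ^ t))
      Filter.atTop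
      (nhds (1 + Real.log 3 / Real.log ((s : ℝ) + 1))) := by
  classical
  set X0 : FinSimpleGraph := { V := V, G := T } with hX0
  have hc0 : X0.G.Connected := hT.isConnected
  have hdeg0 : ∀ v, X0.G.degree v ≤ s := hdeg
  have hcard0 : Fintype.card X0.V = n := hn
  have hW : ∀ t, 2 * wienerIndex (vicsekIter s t X0).G = Dsum (vicsekIter s t X0) :=
    fun t => two_mul_wienerIndex _
  have hup : ∀ t, Dsum (vicsekIter s t X0) ≤ (n * (s + 1) ^ t) ^ 2 * (n * 3 ^ t) :=
    fun t => Dsum_iter_le hs X0 hc0 hdeg0 hcard0 hn2 t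
  have hlo : ∀ t : ℕ, (n * (s + 1) ^ (t + 1)) ^ 2 * (3 ^ t * (n * n - n))
      ≤ (n * (s + 1)) ^ 2 * Dsum (vicsekIter s (t + 1) X0) := by
    intro t
    refine le_trans ?_ (Dsum_iter_ge hs hn2 X0 hc0 hdeg0 hcard0 t)
    apply Nat.mul_le_mul_left
    omega
  have hsR : (2 : ℝ) ≤ (s : ℝ) := by exact_mod_cast hs
  have hnR : (2 : ℝ) ≤ (n : ℝ) := by exact_mod_cast hn2
  have hσ1 : (1 : ℝ) < (s : ℝ) + 1 := by linarith
  have hMpos : ∀ t : ℕ, (0 : ℝ) < (n : ℝ) * ((s : ℝ) + 1) ^ t := by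
    intro t; positivity
  have hM1 : ∀ t : ℕ, (1 : ℝ) < (n : ℝ) * ((s : ℝ) + 1) ^ t := by
    intro t
    have h1 : (1 : ℝ) ≤ ((s : ℝ) + 1) ^ t := one_le_pow₀ (le_of_lt hσ1)
    nlinarith
  have hlogMpos : ∀ t : ℕ, 0 < Real.log ((n : ℝ) * ((s : ℝ) + 1) ^ t) :=
    fun t => Real.log_pos (hM1 t)
  have hlogM : ∀ t : ℕ, Real.log ((n : ℝ) * ((s : ℝ) + 1) ^ t)
      = Real.log n + (t : ℝ) * Real.log ((s : ℝ) + 1) := by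
    intro t
    rw [Real.log_mul (by positivity) (by positivity), Real.log_pow]
  have hcn : (0 : ℝ) < (n : ℝ) * n - n := by nlinarith
  have hnn : n ≤ n * n := Nat.le_mul_of_pos_left n (by omega)
  have hDcast : ∀ t, 2 * (wienerIndex (vicsekIter s t X0).G : ℝ)
      = (Dsum (vicsekIter s t X0) : ℝ) := by
    intro t
    exact_mod_cast congrArg (fun k : ℕ => (k : ℝ)) (hW t)
  have hupR : ∀ t, (Dsum (vicsekIter s t X0) : ℝ)
      ≤ ((n : ℝ) * ((s : ℝ) + 1) ^ t) ^ 2 * ((n : ℝ) * 3 ^ t) := by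
    intro t
    have h := (Nat.cast_le (α := ℝ)).2 (hup t)
    push_cast at h
    convert h using 2 <;> push_cast <;> ring
  have hloR : ∀ t, ((n : ℝ) * ((s : ℝ) + 1) ^ (t + 1)) ^ 2
        * (3 ^ t * ((n : ℝ) * n - n))
      ≤ ((n : ℝ) * ((s : ℝ) + 1)) ^ 2 * (Dsum (vicsekIter s (t + 1) X0) : ℝ) := by
    intro t
    have h := (Nat.cast_le (α := ℝ)).2 (hlo t)
    push_cast [Nat.cast_sub hnn] at h
    convert h using 2 <;> push_cast <;> ring
  set c1 : ℝ := ((n : ℝ) * n - n) / (3 * ((n : ℝ) * ((s : ℝ) + 1)) ^ 2) with hc1e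
  have hc1pos : 0 < c1 := by
    rw [hc1e]
    apply div_pos hcn
    positivity
  have hAup : ∀ t, (Dsum (vicsekIter s t X0) : ℝ) / ((n : ℝ) * ((s : ℝ) + 1) ^ t)
      ≤ (n : ℝ) * (((n : ℝ) * ((s : ℝ) + 1) ^ t) * 3 ^ t) := by
    intro t
    rw [div_le_iff₀ (hMpos t)]
    nlinarith [hupR t, hMpos t]
  have hAlo : ∀ t : ℕ,
      c1 * (((n : ℝ) * ((s : ℝ) + 1) ^ (t + 1)) * 3 ^ (t + 1))
        ≤ (Dsum (vicsekIter s (t + 1) X0) : ℝ) / ((n : ℝ) * ((s : ℝ) + 1) ^ (t + 1)) := by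
    intro t
    rw [le_div_iff₀ (hMpos (t + 1))]
    have hB2 : (0 : ℝ) < ((n : ℝ) * ((s : ℝ) + 1)) ^ 2 := by positivity
    have key : c1 * (((n : ℝ) * ((s : ℝ) + 1) ^ (t + 1)) * 3 ^ (t + 1))
          * ((n : ℝ) * ((s : ℝ) + 1) ^ (t + 1))
        = (((n : ℝ) * ((s : ℝ) + 1) ^ (t + 1)) ^ 2 * (3 ^ t * ((n : ℝ) * n - n)))
          / (((n : ℝ) * ((s : ℝ) + 1)) ^ 2) := by
      rw [hc1e]
      field_simp
      ring
    rw [key, div_le_iff₀ hB2]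
    nlinarith [hloR t]
  have hApos : ∀ t : ℕ,
      0 < (Dsum (vicsekIter s (t + 1) X0) : ℝ) / ((n : ℝ) * ((s : ℝ) + 1) ^ (t + 1)) := by
    intro t
    refine lt_of_lt_of_le ?_ (hAlo t)
    have h := hMpos (t + 1)
    positivity
  have hb : 0 < Real.log ((s : ℝ) + 1) := Real.log_pos hσ1
  have hlolim : Tendsto (fun t : ℕ =>
      (Real.log c1 + (Real.log n + (t : ℝ) * Real.log ((s : ℝ) + 1))
          + (t : ℝ) * Real.log 3)
        / (Real.log n + (t : ℝ) * Real.log ((s : ℝ) + 1))) atTop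
      (nhds (1 + Real.log 3 / Real.log ((s : ℝ) + 1))) :=
    lim_main (Real.log c1) (Real.log 3) (Real.log n) (Real.log ((s : ℝ) + 1)) hb
  have hhilim : Tendsto (fun t : ℕ =>
      (Real.log n + (Real.log n + (t : ℝ) * Real.log ((s : ℝ) + 1))
          + (t : ℝ) * Real.log 3)
        / (Real.log n + (t : ℝ) * Real.log ((s : ℝ) + 1))) atTop
      (nhds (1 + Real.log 3 / Real.log ((s : ℝ) + 1))) :=
    lim_main (Real.log n) (Real.log 3) (Real.log n) (Real.log ((s : ℝ) + 1)) hb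
  refine tendsto_of_tendsto_of_tendsto_of_le_of_le' hlolim hhilim ?_ ?_
  · -- lower bound eventually
    filter_upwards [eventually_ge_atTop 1] with t ht
    obtain ⟨k, rfl⟩ : ∃ k, t = k + 1 := ⟨t - 1, by omega⟩
    rw [hDcast (k + 1), ← hlogM (k + 1)]
    rw [div_le_div_iff_of_pos_right (hlogMpos (k + 1))]
    have h1 : Real.log (c1 * (((n : ℝ) * ((s : ℝ) + 1) ^ (k + 1)) * 3 ^ (k + 1)))
        ≤ Real.log ((Dsum (vicsekIter s (k + 1) X0) : ℝ)
            / ((n : ℝ) * ((s : ℝ) + 1) ^ (k + 1))) := by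
      refine Real.log_le_log ?_ (hAlo k)
      have h := hMpos (k + 1)
      positivity
    rw [Real.log_mul (ne_of_gt hc1pos) (by have := hMpos (k+1); positivity),
      Real.log_mul (ne_of_gt (hMpos (k+1))) (by positivity), Real.log_pow] at h1
    linarith
  · -- upper bound eventually
    filter_upwards [eventually_ge_atTop 1] with t ht
    obtain ⟨k, rfl⟩ : ∃ k, t = k + 1 := ⟨t - 1, by omega⟩
    rw [hDcast (k + 1), ← hlogM (k + 1)]
    rw [div_le_div_iff_of_pos_right (hlogMpos (k + 1))]
    have h1 : Real.log ((Dsum (vicsekIter s (k + 1) X0) : ℝ)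
            / ((n : ℝ) * ((s : ℝ) + 1) ^ (k + 1)))
        ≤ Real.log ((n : ℝ) * (((n : ℝ) * ((s : ℝ) + 1) ^ (k + 1)) * 3 ^ (k + 1))) :=
      Real.log_le_log (hApos k) (hAup (k + 1))
    rw [Real.log_mul (by positivity) (by have := hMpos (k+1); positivity),
      Real.log_mul (ne_of_gt (hMpos (k+1))) (by positivity), Real.log_pow] at h1
    linarith
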